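/- For n ≥ 2 and 0 < τ ≤ 1/4 define A_n(τ) := [ (−1)^{n+1}·π/(4·q₂(τ)^{n+1}) − (1/(2n))(1/2 + 2πi/τ^2)·i^n/(1 − i·q₂(τ))^n ]·4/( π·(2i/τ)^{n+1} ), which equals 4·φ⁽ⁿ⁾(q₂(τ),τ)/(π·2^{n+1}·(i/τ)^{n+1}·n!) where φ⁽ⁿ⁾ is the n-th derivative of φ(·,τ). Then for every ε > 0 there exists τ₀ ∈ (0,1/4] such that for all τ ∈ (0,τ₀) and all integers n ≥ 2 one has |A_n(τ)| ≤ (1+ε)^n. -/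

import Mathlib

open Real Complex

noncomputable def Ppoly (τ : ℝ) (z : ℂ) : ℂ :=
  z ^ 3 + (Complex.I - 1 / (4 * (π : ℂ)) - Complex.I / (τ : ℂ) ^ 2) * z ^ 2
    - z / 4 - Complex.I / 4

/-- The normalized Taylor coefficients `A_n(τ)` of `φ` at the saddle `q₂`. -/
noncomputable def A2coef (q₂ : ℝ → ℂ) (n : ℕ) (τ : ℝ) : ℂ :=
  ((-1 : ℂ) ^ (n + 1) * (π : ℂ) / (4 * q₂ τ ^ (n + 1)) -
      (1 / (2 * (n : ℂ))) * (1 / 2 + 2 * (π : ℂ) * Complex.I / (τ : ℂ) ^ 2) *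
        Complex.I ^ n / (1 - Complex.I * q₂ τ) ^ n) * 4 /
    ((π : ℂ) * (2 * Complex.I / (τ : ℂ)) ^ (n + 1))

private lemma aux_eps (x : ℝ) (h0 : 0 < x) (h1 : x ≤ 1) :
    (1+x/50)^2*(1+x/100) ≤ 1+x := by
  nlinarith [mul_le_mul_of_nonneg_left h1 h0.le,
    mul_le_mul_of_nonneg_left h1 (mul_nonneg h0.le h0.le), h0.le]

set_option maxHeartbeats 1600000 in
theorem statement15 (q₂ : ℝ → ℂ)
    (hq₂ : ∀ τ : ℝ, 0 < τ → τ ≤ 1 / 4 →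
      ‖q₂ τ - Complex.I * (τ : ℂ) / 2‖ < τ / 10 ∧ Ppoly τ (q₂ τ) = 0)
    (ε : ℝ) (hε : 0 < ε) :
    ∃ τ₀ : ℝ, 0 < τ₀ ∧ τ₀ ≤ 1 / 4 ∧
      ∀ τ : ℝ, 0 < τ → τ < τ₀ → ∀ n : ℕ, 2 ≤ n →
        ‖A2coef q₂ n τ‖ ≤ (1 + ε) ^ n := by
  have hπ3 : (3:ℝ) < π := Real.pi_gt_three
  have hπ315 : π < 3.15 := Real.pi_lt_d2
  set ε' := min ε 1 with hε'def
  have hε'0 : 0 < ε' := lt_min hε one_pos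
  have hε'1 : ε' ≤ 1 := min_le_right ε 1
  have hε'ε : ε' ≤ ε := min_le_left ε 1
  refine ⟨min (1/4) (ε'/100), lt_min (by norm_num) (by positivity), min_le_left _ _, ?_⟩
  intro τ hτ hττ₀ n hn
  have hτ4 : τ ≤ 1/4 := ((lt_min_iff.1 hττ₀).1).le
  have hτε : τ < ε'/100 := (lt_min_iff.1 hττ₀).2
  obtain ⟨hnear, hP⟩ := hq₂ τ hτ hτ4
  set q : ℂ := q₂ τ with hqdef
  have hτ0 : (τ:ℂ) ≠ 0 := Complex.ofReal_ne_zero.2 hτ.ne'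
  have hπ0 : (π:ℂ) ≠ 0 := Complex.ofReal_ne_zero.2 Real.pi_ne_zero
  set a : ℝ := ‖q‖ with hadef
  have ha0 : 0 ≤ a := norm_nonneg q
  -- |Iτ/2| = τ/2 and |Iτ| = τ
  have habsI2 : ‖Complex.I * (τ:ℂ) / 2‖ = τ/2 := by
    rw [norm_div, norm_mul, Complex.norm_I, Complex.norm_real, Real.norm_eq_abs, Complex.norm_two,
      abs_of_pos hτ, one_mul]
  -- upper bound on a
  have haub : a ≤ 3/5 * τ := by
    have := norm_add_le (q - Complex.I * (τ:ℂ) / 2) (Complex.I * (τ:ℂ) / 2)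
    simp only [sub_add_cancel, habsI2] at this
    have h2 := hnear.le
    linarith [this]
  -- key algebraic identity from the polynomial equation
  have key : 4*(π:ℂ) * (q ^ 2 + (τ:ℂ)^2/4) =
      -Complex.I * (τ:ℂ)^2 * (4*(π:ℂ)*q^3 + (4*(π:ℂ)*Complex.I - 1)*q^2 - (π:ℂ)*q) := by
    unfold Ppoly at hP
    field_simp at hP
    linear_combination Complex.I * hP + (4*(π:ℂ)*q^2 + (π:ℂ)*(τ:ℂ)^2) * Complex.I_sq
  -- bound |q² + τ²/4| ≤ 3/10 τ³
  have hEb : ‖q^2 + (τ:ℂ)^2/4‖ ≤ 3/10 * τ^3 := by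
    have hS : ‖4*(π:ℂ)*q^3 + (4*(π:ℂ)*Complex.I - 1)*q^2 - (π:ℂ)*q‖
        ≤ 4*π*a^3 + (4*π+1)*a^2 + π*a := by
      refine le_trans (norm_sub_le _ _) ?_
      gcongr
      · refine le_trans (norm_add_le _ _) ?_
        gcongr
        · rw [norm_mul, norm_pow]
          rw [show ((4:ℂ)*(π:ℂ)) = ((4*π:ℝ):ℂ) by push_cast; ring, Complex.norm_real, Real.norm_eq_abs,
            abs_of_pos (by positivity)]
        · rw [norm_mul, norm_pow]
          gcongr
          refine le_trans (norm_sub_le _ _) ?_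
          rw [norm_mul, Complex.norm_I, mul_one, norm_one,
            show ((4:ℂ)*(π:ℂ)) = ((4*π:ℝ):ℂ) by push_cast; ring, Complex.norm_real, Real.norm_eq_abs,
            abs_of_pos (by positivity)]
      · rw [norm_mul, Complex.norm_real, Real.norm_eq_abs, abs_of_pos Real.pi_pos]
  -- combine
    have hkeyabs : 4*π*‖q^2 + (τ:ℂ)^2/4‖
        = τ^2 * ‖4*(π:ℂ)*q^3 + (4*(π:ℂ)*Complex.I - 1)*q^2 - (π:ℂ)*q‖ := by
      have h := congrArg (‖·‖) key
      simp only [norm_mul, norm_pow, Complex.norm_real, Real.norm_eq_abs, Complex.norm_ofNat] at h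
      rw [abs_of_pos Real.pi_pos, abs_of_pos hτ] at h
      simpa [norm_mul] using h
    have hπpos := Real.pi_pos
    have hb3 : a^3 ≤ (3/5*τ)^3 := pow_le_pow_left₀ ha0 haub 3
    have hb2 : a^2 ≤ (3/5*τ)^2 := pow_le_pow_left₀ ha0 haub 2
    have hτ2 : τ^2 ≤ 1/16 := by nlinarith [mul_le_mul_of_nonneg_left hτ4 hτ.le]
    have e1 : π*τ^2 ≤ π*(1/16) := mul_le_mul_of_nonneg_left hτ2 hπpos.le
    have e2 : π*τ ≤ π*(1/4) := mul_le_mul_of_nonneg_left hτ4 hπpos.le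
    have e3 : τ ≤ π/12 := by linarith
    have hbr : (108/125)*π*τ^2 + (9/25)*(4*π+1)*τ + 3/5*π ≤ 6/5*π := by
      nlinarith [e1, e2, e3, hπpos]
    have hstep : τ^2 * (4*π*(3/5*τ)^3 + (4*π+1)*(3/5*τ)^2 + π*(3/5*τ)) ≤ 4*π*(3/10*τ^3) := by
      nlinarith [mul_le_mul_of_nonneg_left hbr (by positivity : (0:ℝ) ≤ τ^3)]
    have hinner : 4*π*a^3 + (4*π+1)*a^2 + π*a
        ≤ 4*π*(3/5*τ)^3 + (4*π+1)*(3/5*τ)^2 + π*(3/5*τ) := by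
      nlinarith [mul_le_mul_of_nonneg_left hb3 (by positivity : (0:ℝ) ≤ 4*π),
        mul_le_mul_of_nonneg_left hb2 (by positivity : (0:ℝ) ≤ 4*π+1),
        mul_le_mul_of_nonneg_left haub (by positivity : (0:ℝ) ≤ π)]
    have h2 : 4*π*‖q^2 + (τ:ℂ)^2/4‖ ≤ 4*π*(3/10*τ^3) := by
      rw [hkeyabs]
      refine le_trans ?_ hstep
      exact mul_le_mul_of_nonneg_left (le_trans hS hinner) (sq_nonneg τ)
    exact le_of_mul_le_mul_left h2 (by positivity)
  -- |q + Iτ/2| ≥ 9τ/10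
  have hplus : 9/10 * τ ≤ ‖q + Complex.I * (τ:ℂ) / 2‖ := by
    have h1 : ‖Complex.I * (τ:ℂ)‖ = τ := by
      rw [norm_mul, Complex.norm_I, Complex.norm_real, Real.norm_eq_abs, abs_of_pos hτ, one_mul]
    have := norm_sub_le (q + Complex.I * (τ:ℂ)/2) (q - Complex.I * (τ:ℂ)/2)
    have h2 : (q + Complex.I * (τ:ℂ)/2) - (q - Complex.I * (τ:ℂ)/2) = Complex.I * (τ:ℂ) := by
      ring
    rw [h2, h1] at this
    linarith [hnear.le]
  -- |q - Iτ/2| ≤ τ²/3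
  have hclose : ‖q - Complex.I * (τ:ℂ) / 2‖ ≤ τ^2/3 := by
    have hfac : (q - Complex.I * (τ:ℂ)/2) * (q + Complex.I * (τ:ℂ)/2) = q^2 + (τ:ℂ)^2/4 := by
      linear_combination (-(τ:ℂ)^2/4) * Complex.I_sq
    have hmul : ‖q - Complex.I * (τ:ℂ)/2‖ * ‖q + Complex.I * (τ:ℂ)/2‖
        ≤ 3/10 * τ^3 := by
      rw [← norm_mul, hfac]; exact hEb
    nlinarith [norm_nonneg (q - Complex.I * (τ:ℂ)/2), hplus, hτ]
  -- lower bound on a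
  have halb : τ/2 - τ^2/3 ≤ a := by
    have := norm_sub_le q (q - Complex.I * (τ:ℂ)/2)
    have h2 : q - (q - Complex.I * (τ:ℂ)/2) = Complex.I * (τ:ℂ)/2 := by ring
    rw [h2, habsI2] at this
    linarith
  have hapos : 0 < a := by
    have : 0 < τ/2 - τ^2/3 := by nlinarith [mul_le_mul_of_nonneg_left hτ4 hτ.le]
    linarith
  have hq0 : q ≠ 0 := norm_ne_zero_iff.mp (by rw [← hadef]; exact hapos.ne')
  -- auxiliary facts
  have hτ2 : τ^2 ≤ 1/16 := by nlinarith [mul_le_mul_of_nonneg_left hτ4 hτ.le]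
  have hnR : (2:ℝ) ≤ (n:ℝ) := by exact_mod_cast hn
  have hn0 : (0:ℝ) < (n:ℝ) := by linarith
  -- |1 - I q| ≥ 4/5
  have hv : (4/5 : ℝ) ≤ ‖1 - Complex.I*q‖ := by
    have h1 := norm_add_le (1 - Complex.I*q) (Complex.I*q)
    have h2 : (1 - Complex.I*q) + Complex.I*q = 1 := by ring
    rw [h2, norm_one] at h1
    have h3 : ‖Complex.I*q‖ = a := by rw [norm_mul, Complex.norm_I, one_mul]
    rw [h3] at h1
    linarith
  -- |1/2 + 2πI/τ²| ≤ 7/τ²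
  have hw : ‖1/2 + 2*(π:ℂ)*Complex.I/(τ:ℂ)^2‖ ≤ 7/τ^2 := by
    refine le_trans (norm_add_le _ _) ?_
    have h1 : ‖(1:ℂ)/2‖ = 1/2 := by
      rw [norm_div, norm_one, Complex.norm_two]
    have h2 : ‖2*(π:ℂ)*Complex.I/(τ:ℂ)^2‖ = 2*π/τ^2 := by
      simp [norm_div, norm_mul, norm_pow, Complex.norm_real, Real.norm_eq_abs, abs_of_pos hτ,
        abs_of_pos Real.pi_pos]
    rw [h1, h2]
    rw [div_add_div _ _ (by norm_num) (by positivity), div_le_div_iff₀ (by positivity) (by positivity)]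
    nlinarith [hτ2, hπ315, sq_nonneg τ, hτ]
  -- abs of the three pieces
  have hDabs : ‖(π:ℂ) * (2*Complex.I/(τ:ℂ))^(n+1)‖ = π * (2/τ)^(n+1) := by
    simp [norm_mul, norm_pow, norm_div, Complex.norm_real, Real.norm_eq_abs, abs_of_pos hτ,
      abs_of_pos Real.pi_pos]
  have hT1abs : ‖(-1:ℂ)^(n+1) * (π:ℂ) / (4 * q^(n+1))‖ = π / (4*a^(n+1)) := by
    rw [norm_div, norm_mul, norm_pow, norm_mul, norm_pow]
    simp only [Complex.norm_real, Real.norm_eq_abs, Complex.norm_ofNat, ← hadef]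
    rw [abs_of_pos Real.pi_pos, show ‖(-1:ℂ)‖ = 1 by simp, one_pow, one_mul]
  have hT2abs : ‖(1/(2*(n:ℂ))) * (1/2 + 2*(π:ℂ)*Complex.I/(τ:ℂ)^2) *
        Complex.I^n / (1 - Complex.I*q)^n‖ ≤ (1/(2*(n:ℝ)))*(7/τ^2)*(5/4:ℝ)^n := by
    rw [norm_div, norm_mul, norm_mul, norm_pow, Complex.norm_I, one_pow, mul_one, norm_pow]
    have h1 : ‖1/(2*(n:ℂ))‖ = 1/(2*(n:ℝ)) := by
      rw [norm_div, norm_one, norm_mul, Complex.norm_two, Complex.norm_natCast]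
    rw [h1]
    have hvpow : (4/5:ℝ)^n ≤ (‖1 - Complex.I*q‖)^n :=
      pow_le_pow_left₀ (by norm_num) hv n
    have hstep : (1/(2*(n:ℝ))) * ‖1/2 + 2*(π:ℂ)*Complex.I/(τ:ℂ)^2‖ /
        (‖1 - Complex.I*q‖)^n ≤ (1/(2*(n:ℝ))) * (7/τ^2) / (4/5:ℝ)^n := by
      gcongr <;> first
        | positivity
        | exact hw
        | exact hv
        | exact hvpow
    refine le_trans hstep ?_
    rw [div_eq_mul_inv, ← inv_pow, inv_div]
  -- rewrite the goal
  have hgoal : ‖A2coef q₂ n τ‖ =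
      ‖(-1:ℂ)^(n+1) * (π:ℂ) / (4 * q^(n+1)) -
        (1/(2*(n:ℂ))) * (1/2 + 2*(π:ℂ)*Complex.I/(τ:ℂ)^2) *
          Complex.I^n / (1 - Complex.I*q)^n‖ * 4 / (π * (2/τ)^(n+1)) := by
    rw [A2coef, ← hqdef, norm_div, norm_mul, hDabs]
    norm_num
  rw [hgoal]
  have hsum : ‖(-1:ℂ)^(n+1) * (π:ℂ) / (4 * q^(n+1)) -
        (1/(2*(n:ℂ))) * (1/2 + 2*(π:ℂ)*Complex.I/(τ:ℂ)^2) *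
          Complex.I^n / (1 - Complex.I*q)^n‖
      ≤ π/(4*a^(n+1)) + (1/(2*(n:ℝ)))*(7/τ^2)*(5/4:ℝ)^n := by
    refine le_trans (norm_sub_le _ _) ?_
    rw [hT1abs]
    exact add_le_add_right hT2abs _
  have hDpos : (0:ℝ) < π * (2/τ)^(n+1) := by positivity
  -- the two real pieces
  have hr : τ/(2*a) ≤ 1 + 2*τ := by
    rw [div_le_iff₀ (by positivity)]
    nlinarith [mul_le_mul_of_nonneg_left halb (by linarith : (0:ℝ) ≤ 1+2*τ), hτ4, hτ.le,
      sq_nonneg τ, mul_nonneg (mul_nonneg hτ.le hτ.le) hτ.le]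
  have hpe : (π/(4*a^(n+1)))*4/(π*(2/τ)^(n+1)) = (τ/(2*a))^(n+1) := by
    rw [div_pow, div_pow]
    have h2a : (2*a)^(n+1) ≠ 0 := by positivity
    field_simp
    ring
  have hpiece1 : (π/(4*a^(n+1)))*4/(π*(2/τ)^(n+1)) ≤ (1+2*τ)^(n+1) := by
    rw [hpe]
    exact pow_le_pow_left₀ (by positivity) hr _
  have hpiece2 : ((1/(2*(n:ℝ)))*(7/τ^2)*(5/4:ℝ)^n)*4/(π*(2/τ)^(n+1)) ≤ τ := by
    have hDr : ((2:ℝ)/τ)^(n+1) = ((τ/2)^(n+1))⁻¹ := by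
      rw [← inv_pow, inv_div]
    have h4D : ((1/(2*(n:ℝ)))*(7/τ^2)*(5/4:ℝ)^n)*4/(π*(2/τ)^(n+1))
        = (1/(2*(n:ℝ)))*(7/τ^2)*(4/π)*((5/4:ℝ)^n*(τ/2)^(n+1)) := by
      rw [hDr]
      field_simp
    rw [h4D]
    have hcomb : (5/4:ℝ)^n * (τ/2)^(n+1) = (τ/2) * (5*τ/8)^n := by
      rw [pow_succ, ← mul_assoc, ← mul_pow,
        show (5/4:ℝ)*(τ/2) = 5*τ/8 by ring]
      ring
    rw [hcomb]
    have hpow : (5*τ/8:ℝ)^n ≤ (5*τ/8)^2 := by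
      refine pow_le_pow_of_le_one (by positivity) (by nlinarith) hn
    have hfrac : (1:ℝ)/(2*(n:ℝ)) ≤ 1/4 := by
      rw [div_le_div_iff₀ (by linarith) (by norm_num)]
      linarith
    calc (1/(2*(n:ℝ)))*(7/τ^2)*(4/π)*((τ/2)*(5*τ/8)^n)
        ≤ (1/4)*(7/τ^2)*(4/π)*((τ/2)*(5*τ/8)^2) := by
          gcongr <;> first
            | positivity
            | exact hpow
            | exact hfrac
      _ = 175*τ/(128*π) := by field_simp; ring
      _ ≤ τ := by
          rw [div_le_iff₀ (by positivity)]
          nlinarith [hπ3, hτ]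
  -- combine
  have hmain : ‖(-1:ℂ)^(n+1) * (π:ℂ) / (4 * q^(n+1)) -
        (1/(2*(n:ℂ))) * (1/2 + 2*(π:ℂ)*Complex.I/(τ:ℂ)^2) *
          Complex.I^n / (1 - Complex.I*q)^n‖ * 4 / (π * (2/τ)^(n+1))
      ≤ (1+2*τ)^(n+1) + τ := by
    calc ‖_‖ * 4 / (π * (2/τ)^(n+1))
        ≤ (π/(4*a^(n+1)) + (1/(2*(n:ℝ)))*(7/τ^2)*(5/4:ℝ)^n) * 4 / (π * (2/τ)^(n+1)) := by
          gcongr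
      _ = (π/(4*a^(n+1)))*4/(π*(2/τ)^(n+1))
            + ((1/(2*(n:ℝ)))*(7/τ^2)*(5/4:ℝ)^n)*4/(π*(2/τ)^(n+1)) := by ring
      _ ≤ (1+2*τ)^(n+1) + τ := add_le_add hpiece1 hpiece2
  refine le_trans hmain ?_
  clear hmain hsum hDpos hr hpe hpiece1 hpiece2 hgoal hT1abs hT2abs hDabs hw hv
  clear hq₂ hnear hP key hEb hplus hclose hq0 habsI2
  -- final elementary estimate
  have hb1 : (1+2*τ)^(n+1) ≤ (1+ε'/50)^(n+1) :=
    pow_le_pow_left₀ (by positivity) (by linarith) _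
  have hb2 : (1+ε'/50)^(n+1) ≤ ((1+ε'/50)^2)^n := by
    rw [← pow_mul]
    exact pow_le_pow_right₀ (by linarith) (by omega)
  have hBn1 : (1:ℝ) ≤ ((1+ε'/50)^2)^n := by
    have h1B : (1:ℝ) ≤ (1+ε'/50)^2 := by nlinarith [hε'0.le]
    have := pow_le_pow_left₀ (by norm_num : (0:ℝ) ≤ 1) h1B n
    simpa using this
  have hc1 : ((1+ε'/50)^2)^n + ε'/100 ≤ ((1+ε'/50)^2)^n * (1+ε'/100) := by
    have := mul_le_mul_of_nonneg_left hBn1 (by positivity : (0:ℝ) ≤ ε'/100)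
    linarith
  have hc2 : ((1+ε'/50)^2)^n * (1+ε'/100) ≤ ((1+ε'/50)^2)^n * (1+ε'/100)^n := by
    refine mul_le_mul_of_nonneg_left ?_ (by positivity)
    exact le_self_pow₀ (by linarith) (by omega)
  have hc3 : ((1+ε'/50)^2)^n * (1+ε'/100)^n = ((1+ε'/50)^2*(1+ε'/100))^n := (mul_pow _ _ _).symm
  have hc4 : (1+ε'/50)^2*(1+ε'/100) ≤ 1+ε' := aux_eps ε' hε'0 hε'1
  have hc5 : ((1+ε'/50)^2*(1+ε'/100))^n ≤ (1+ε')^n :=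
    pow_le_pow_left₀ (by positivity) hc4 n
  have hc6 : (1+ε')^n ≤ (1+ε)^n := pow_le_pow_left₀ (by positivity) (by linarith) n
  have hτε'' : τ ≤ ε'/100 := hτε.le
  calc (1+2*τ)^(n+1) + τ ≤ ((1+ε'/50)^2)^n + ε'/100 := by
        have := le_trans hb1 hb2
        linarith
    _ ≤ ((1+ε'/50)^2)^n * (1+ε'/100) := hc1
    _ ≤ ((1+ε'/50)^2*(1+ε'/100))^n := by rw [← hc3]; exact hc2
    _ ≤ (1+ε')^n := hc5
    _ ≤ (1+ε)^n := hc6
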